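/- (Globevnik's Schwarz lemma) Let F : 𝔻 → Ω_n be holomorphic with F(ζ_1) = 0 for some ζ_1 ∈ 𝔻. Then for every ζ_2 ∈ 𝔻, the spectral radius satisfies r(F(ζ_2)) ≤ |(ζ_1 − ζ_2)/(1 − conj(ζ_1)·ζ_2)|. -/

import Mathlib

open Metric Module LinearMap Set

/-- The spectral radius of a complex `n × n` matrix. -/
noncomputable def sRad {n : ℕ} (A : Matrix (Fin n) (Fin n) ℂ) : ℝ :=
  sSup ((fun μ => ‖μ‖) '' spectrum ℂ A)

lemma traceData {n : ℕ} (A : Matrix (Fin n) (Fin n) ℂ) :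
    ∃ (s : Finset ℂ) (d : ℂ → ℕ),
      (↑s = spectrum ℂ A) ∧ (∀ μ ∈ s, 1 ≤ d μ) ∧
      (∀ k : ℕ, Matrix.trace (A ^ k) = ∑ μ ∈ s, (d μ : ℂ) * μ ^ k) := by
  classical
  set f : Module.End ℂ (Fin n → ℂ) := Matrix.toLinAlgEquiv' A with hfdef
  have hspec : spectrum ℂ f = spectrum ℂ A := AlgEquiv.spectrum_eq (Matrix.toLinAlgEquiv') A
  have htop : ⨆ μ, f.maxGenEigenspace μ = ⊤ := Module.End.iSup_maxGenEigenspace_eq_top f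
  have hds := DirectSum.isInternal_submodule_of_iSupIndep_of_iSup_eq_top
    f.independent_maxGenEigenspace htop
  have h_fin : {μ | f.maxGenEigenspace μ ≠ ⊥}.Finite :=
    WellFoundedGT.finite_ne_bot_of_iSupIndep f.independent_maxGenEigenspace
  refine ⟨h_fin.toFinset, fun μ => finrank ℂ (f.maxGenEigenspace μ), ?_, ?_, ?_⟩
  · ext μ
    simp only [Finset.coe_sort_coe, Set.Finite.mem_toFinset, Set.mem_setOf_eq, Finset.mem_coe]
    rw [← hspec]
    constructor
    · intro h
      exact (Module.End.HasUnifEigenvalue.lt zero_lt_one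
        (h : f.HasUnifEigenvalue μ ⊤)).mem_spectrum
    · intro h
      exact Module.End.HasUnifEigenvalue.le le_top
        (Module.End.HasUnifEigenvalue.of_mem_spectrum h)
  · intro μ hμ
    rw [Set.Finite.mem_toFinset] at hμ
    have : finrank ℂ (f.maxGenEigenspace μ) ≠ 0 := fun h0 => hμ (Submodule.finrank_eq_zero.mp h0)
    exact Nat.one_le_iff_ne_zero.mpr this
  · intro k
    have hcomm : ∀ μ : ℂ, MapsTo (f ^ k) (f.maxGenEigenspace μ) (f.maxGenEigenspace μ) :=
      fun μ => Module.End.mapsTo_maxGenEigenspace_of_comm ((Commute.refl f).pow_right k) μ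
    have h1 : Matrix.trace (A ^ k) = trace ℂ _ (f ^ k) := by
      rw [trace_eq_matrix_trace ℂ (Pi.basisFun ℂ (Fin n)), LinearMap.toMatrix_eq_toMatrix']
      rw [hfdef, ← map_pow]
      rw [show (LinearMap.toMatrix' (Matrix.toLinAlgEquiv' (A ^ k)) : Matrix (Fin n) (Fin n) ℂ)
            = A ^ k from LinearMap.toMatrixAlgEquiv'_toLinAlgEquiv' (A ^ k)]
    rw [h1, LinearMap.trace_eq_sum_trace_restrict' hds h_fin hcomm]
    refine Finset.sum_congr rfl fun μ _ => ?_
    have hres : MapsTo f (f.maxGenEigenspace μ) (f.maxGenEigenspace μ) :=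
      Module.End.mapsTo_maxGenEigenspace_of_comm rfl μ
    have hpow : (f ^ k).restrict (hcomm μ) = (f.restrict hres) ^ k :=
      (Module.End.pow_restrict k hres).symm
    rw [hpow]
    set g : Module.End ℂ (f.maxGenEigenspace μ) := f.restrict hres with hgdef
    set N : Module.End ℂ (f.maxGenEigenspace μ) := g - μ • 1 with hNdef
    have hNnil : IsNilpotent N := by
      have h := f.isNilpotent_restrict_maxGenEigenspace_sub_algebraMap μ
      have : N = (f - algebraMap ℂ (Module.End ℂ (Fin n → ℂ)) μ).restrict
          (Module.End.mapsTo_maxGenEigenspace_of_comm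
            (Algebra.mul_sub_algebraMap_commutes f μ) μ) := by
        ext x
        simp [hNdef, hgdef, LinearMap.restrict_apply, Algebra.algebraMap_eq_smul_one]
        rfl
      rwa [this]
    have hg : g = μ • 1 + N := by rw [hNdef]; abel
    have hcomm2 : Commute (μ • (1 : Module.End ℂ (f.maxGenEigenspace μ))) N :=
      (Commute.one_left N).smul_left μ
    rw [hg, hcomm2.add_pow]
    rw [map_sum]
    rw [Finset.sum_eq_single k]
    · have : trace ℂ _ ((μ • (1:Module.End ℂ (f.maxGenEigenspace μ))) ^ k * N ^ (k - k) *
          (Nat.choose k k : Module.End ℂ (f.maxGenEigenspace μ))) =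
          (finrank ℂ (f.maxGenEigenspace μ) : ℂ) * μ ^ k := by
        simp [smul_pow, Nat.sub_self, trace_one]
        ring
      rw [this]
    · intro j hj hjk
      have hkj : 1 ≤ k - j := by
        rw [Finset.mem_range] at hj
        omega
      have hNj : IsNilpotent (N ^ (k - j)) := hNnil.pow_of_pos (by omega)
      have ht0 : trace ℂ _ (N ^ (k - j)) = 0 :=
        (LinearMap.isNilpotent_trace_of_isNilpotent hNj).eq_zero
      rw [smul_pow, one_pow, smul_mul_assoc, smul_mul_assoc, one_mul, map_smul]
      have : trace ℂ _ ((N ^ (k - j)) * (Nat.choose k j : Module.End ℂ (f.maxGenEigenspace μ))) = 0 := by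
        have : ((Nat.choose k j : Module.End ℂ (f.maxGenEigenspace μ))) = ((Nat.choose k j : ℂ) • 1) := by
          rw [← map_natCast (algebraMap ℂ (Module.End ℂ (f.maxGenEigenspace μ))) (Nat.choose k j),
            Algebra.algebraMap_eq_smul_one]
        rw [this, mul_smul_comm, mul_one, map_smul, ht0, smul_zero]
      rw [this, smul_zero]
    · intro h
      simp at h

lemma norm_one_sub_conj_mul_sq (a z : ℂ) :
    ‖1 - (starRingEnd ℂ a) * z‖ ^ 2 = ‖z - a‖ ^ 2 + (1 - ‖a‖ ^ 2) * (1 - ‖z‖ ^ 2) := by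
  simp only [Complex.sq_norm]
  simp only [Complex.normSq_apply, Complex.sub_re, Complex.sub_im, Complex.mul_re,
    Complex.mul_im, Complex.conj_re, Complex.conj_im, Complex.one_re, Complex.one_im]
  ring

lemma schwarz_mult {u : ℂ → ℂ} (hu : DifferentiableOn ℂ u (ball (0:ℂ) 1))
    {C : ℝ} (hC : 0 ≤ C) (k : ℕ) {ζ₁ ζ₂ : ℂ} (hζ₁ : ζ₁ ∈ ball (0:ℂ) 1)
    (hζ₂ : ζ₂ ∈ ball (0:ℂ) 1)
    (hb : ∀ ζ ∈ ball (0:ℂ) 1, ‖(ζ - ζ₁) ^ k * u ζ‖ ≤ C) :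
    ‖(ζ₂ - ζ₁) ^ k * u ζ₂‖ ≤ C * ‖(ζ₁ - ζ₂) / (1 - (starRingEnd ℂ ζ₁) * ζ₂)‖ ^ k := by
  rw [mem_ball_zero_iff] at hζ₁ hζ₂
  set a := ζ₁ with ha
  have hden : (1 - (starRingEnd ℂ a) * ζ₂) ≠ 0 := by
    intro h
    have : ‖(starRingEnd ℂ a) * ζ₂‖ < 1 := by
      rw [norm_mul, RCLike.norm_conj]
      calc ‖a‖ * ‖ζ₂‖ ≤ ‖a‖ * 1 := by
            exact mul_le_mul_of_nonneg_left hζ₂.le (norm_nonneg _)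
        _ < 1 := by simpa using hζ₁
    rw [sub_eq_zero] at h
    rw [← h] at this
    simp at this
  set φ : ℂ → ℂ := fun ζ => (1 - (starRingEnd ℂ a) * ζ) ^ k * u ζ with hφdef
  have hφdiff : DifferentiableOn ℂ φ (ball (0:ℂ) 1) :=
    (((differentiableOn_const _).sub ((differentiableOn_id).const_mul _)).pow k).mul hu
  -- the key bound
  have hkey : ‖φ ζ₂‖ ≤ C := by
    set t₀ : ℝ := max ‖a‖ ‖ζ₂‖ with ht₀
    have ht₀1 : t₀ < 1 := max_lt hζ₁ hζ₂
    have ht₀0 : 0 ≤ t₀ := le_max_of_le_left (norm_nonneg _)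
    set ρ : ℝ → ℝ := fun s => 1 + (1 - ‖a‖ ^ 2) * (1 - s ^ 2) / (s - ‖a‖) ^ 2 with hρ
    have main : ∀ s ∈ Set.Ioo t₀ 1, ‖φ ζ₂‖ ≤ C * ρ s ^ k := by
      intro s hs
      obtain ⟨hs1, hs2⟩ := hs
      have hsa : ‖a‖ < s := lt_of_le_of_lt (le_max_left _ _) hs1
      have hs0 : 0 < s := lt_of_le_of_lt ht₀0 hs1
      have hρ1 : 1 ≤ ρ s := by
        have h1 : 0 ≤ (1 - ‖a‖ ^ 2) := by nlinarith [norm_nonneg a]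
        have h2 : 0 ≤ (1 - s ^ 2) := by nlinarith
        have h3 : 0 ≤ (s - ‖a‖) ^ 2 := sq_nonneg _
        have := div_nonneg (mul_nonneg h1 h2) h3
        simp only [hρ]; linarith
      apply Complex.norm_le_of_forall_mem_frontier_norm_le (isBounded_ball (x := (0:ℂ)) (r := s))
      · exact ⟨hφdiff.mono (ball_subset_ball hs2.le),
          hφdiff.continuousOn.mono (by
            rw [closure_ball (0:ℂ) hs0.ne']
            exact closedBall_subset_ball hs2)⟩
      · intro z hz
        rw [frontier_ball (0:ℂ) hs0.ne', mem_sphere_zero_iff_norm] at hz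
        have hzball : z ∈ ball (0:ℂ) 1 := by rw [mem_ball_zero_iff, hz]; exact hs2
        have hbz := hb z hzball
        rw [norm_mul, norm_pow] at hbz ⊢
        have hD : s - ‖a‖ ≤ ‖z - a‖ := by
          have := norm_sub_norm_le z a
          linarith [hz ▸ this]
        have hDpos : 0 < ‖z - a‖ := lt_of_lt_of_le (by linarith) hD
        have hE : ‖1 - (starRingEnd ℂ a) * z‖ ≤ ρ s * ‖z - a‖ := by
          have hid := norm_one_sub_conj_mul_sq a z
          rw [hz] at hid
          have h1 : 0 ≤ (1 - ‖a‖ ^ 2) := by nlinarith [norm_nonneg a]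
          have h2 : 0 ≤ (1 - s ^ 2) := by nlinarith
          have hpos : (0:ℝ) < (s - ‖a‖) ^ 2 := by
            have h' : (0:ℝ) < s - ‖a‖ := by linarith
            positivity
          have hsq : (s - ‖a‖)^2 ≤ ‖z - a‖^2 := by nlinarith
          set c := (1 - ‖a‖ ^ 2) * (1 - s ^ 2) with hc
          have hc0 : 0 ≤ c := mul_nonneg h1 h2
          have key : c ≤ c / (s - ‖a‖) ^ 2 * ‖z - a‖ ^ 2 := by
            rw [div_mul_eq_mul_div, le_div_iff₀ hpos]
            exact mul_le_mul_of_nonneg_left hsq hc0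
          have hd0 : 0 ≤ c / (s - ‖a‖) ^ 2 := div_nonneg hc0 hpos.le
          have hEsq : ‖1 - (starRingEnd ℂ a) * z‖ ^ 2 ≤ (ρ s * ‖z - a‖) ^ 2 := by
            have hρs : ρ s = 1 + c / (s - ‖a‖) ^ 2 := rfl
            rw [hρs, hid]
            nlinarith [sq_nonneg (‖z - a‖),
              mul_nonneg (mul_nonneg hd0 hd0) (sq_nonneg (‖z - a‖)),
              mul_nonneg hd0 (sq_nonneg (‖z - a‖))]
          have h0 : (0:ℝ) ≤ ρ s * ‖z - a‖ := mul_nonneg (by linarith) (norm_nonneg _)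
          calc ‖1 - (starRingEnd ℂ a) * z‖
              = Real.sqrt (‖1 - (starRingEnd ℂ a) * z‖ ^ 2) := (Real.sqrt_sq (norm_nonneg _)).symm
            _ ≤ Real.sqrt ((ρ s * ‖z - a‖) ^ 2) := Real.sqrt_le_sqrt hEsq
            _ = ρ s * ‖z - a‖ := Real.sqrt_sq h0
        calc ‖1 - (starRingEnd ℂ a) * z‖ ^ k * ‖u z‖
            ≤ (ρ s * ‖z - a‖) ^ k * ‖u z‖ := by
              apply mul_le_mul_of_nonneg_right _ (norm_nonneg _)
              exact pow_le_pow_left₀ (norm_nonneg _) hE k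
          _ = ρ s ^ k * (‖z - a‖ ^ k * ‖u z‖) := by rw [mul_pow, mul_assoc]
          _ ≤ ρ s ^ k * C := by
              apply mul_le_mul_of_nonneg_left hbz (by positivity)
          _ = C * ρ s ^ k := mul_comm _ _
      · rw [closure_ball (0:ℂ) hs0.ne', mem_closedBall_zero_iff]
        exact le_trans (le_max_right _ _) hs1.le
    -- take the limit s → 1⁻
    have hmem : Set.Ioo t₀ 1 ∈ nhdsWithin (1:ℝ) (Set.Iio 1) :=
      Ioo_mem_nhdsLT_of_mem ⟨ht₀1, le_refl _⟩
    have hcont : Filter.Tendsto (fun s => C * ρ s ^ k) (nhdsWithin (1:ℝ) (Set.Iio 1)) (nhds C) := by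
      have hne : ((1:ℝ) - ‖a‖) ^ 2 ≠ 0 := by
        have h' : (0:ℝ) < 1 - ‖a‖ := by linarith
        positivity
      have c1 : ContinuousAt (fun s : ℝ => C * ρ s ^ k) 1 := by
        apply ContinuousAt.mul continuousAt_const
        apply ContinuousAt.pow
        apply ContinuousAt.add continuousAt_const
        apply ContinuousAt.div
        · fun_prop
        · fun_prop
        · simpa using hne
      have h2 : Filter.Tendsto (fun s => C * ρ s ^ k) (nhdsWithin (1:ℝ) (Set.Iio 1))
          (nhds (C * ρ 1 ^ k)) := c1.continuousWithinAt.tendsto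
      have h3 : C * ρ 1 ^ k = C := by simp [hρ]
      rwa [h3] at h2
    refine ge_of_tendsto hcont ?_
    filter_upwards [hmem] with s hs using main s hs
  -- conclude
  have hfact : (ζ₂ - a) ^ k * u ζ₂ =
      ((ζ₂ - a) / (1 - (starRingEnd ℂ a) * ζ₂)) ^ k * φ ζ₂ := by
    rw [hφdef]
    show (ζ₂ - a) ^ k * u ζ₂ = ((ζ₂ - a) / (1 - (starRingEnd ℂ a) * ζ₂)) ^ k * ((1 - (starRingEnd ℂ a) * ζ₂) ^ k * u ζ₂)
    rw [div_pow, div_mul_eq_mul_div, eq_div_iff (pow_ne_zero _ hden)]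
    ring
  rw [hfact, norm_mul, norm_pow]
  have h1 : ‖(ζ₂ - a) / (1 - (starRingEnd ℂ a) * ζ₂)‖ =
      ‖(a - ζ₂) / (1 - (starRingEnd ℂ a) * ζ₂)‖ := by
    rw [norm_div, norm_div, norm_sub_rev]
  rw [h1]
  calc ‖(a - ζ₂) / (1 - (starRingEnd ℂ a) * ζ₂)‖ ^ k * ‖φ ζ₂‖
      ≤ ‖(a - ζ₂) / (1 - (starRingEnd ℂ a) * ζ₂)‖ ^ k * C := by
        apply mul_le_mul_of_nonneg_left hkey (by positivity)
    _ = C * ‖(a - ζ₂) / (1 - (starRingEnd ℂ a) * ζ₂)‖ ^ k := by ring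

lemma spectrum_bound {n : ℕ} {s : Finset ℂ} {d : ℂ → ℕ} {m : ℝ}
    (hm : 0 ≤ m) (hd : ∀ μ ∈ s, 1 ≤ d μ)
    (htr : ∀ k : ℕ, 1 ≤ k → ‖∑ μ ∈ s, (d μ : ℂ) * μ ^ k‖ ≤ (n : ℝ) * m ^ k) :
    ∀ μ ∈ s, ‖μ‖ ≤ m := by
  by_contra hcon
  push_neg at hcon
  obtain ⟨μw, hμw, hμwm⟩ := hcon
  obtain ⟨μ₀, hμ₀, hmax⟩ := Finset.exists_max_image s (fun μ => ‖μ‖) ⟨μw, hμw⟩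
  set r := ‖μ₀‖ with hr
  have hrm : m < r := lt_of_lt_of_le hμwm (hmax μw hμw)
  have hr0 : 0 < r := lt_of_le_of_lt hm hrm
  have h0 : μ₀ ≠ 0 := by
    intro h; rw [h] at hr; simp at hr; rw [hr] at hr0; exact lt_irrefl _ hr0
  set q : ℝ := m / r with hq
  have hq0 : 0 ≤ q := div_nonneg hm hr0.le
  have hq1 : q < 1 := (div_lt_one hr0).mpr hrm
  have h1q : 0 < 1 - q := by linarith
  have hgeom : ∀ K : ℕ, ∑ k ∈ Finset.range K, q ^ k ≤ 1 / (1 - q) := by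
    intro K
    rw [le_div_iff₀ h1q]
    have h := geom_sum_mul q K
    have : (∑ k ∈ Finset.range K, q ^ k) * (1 - q) = 1 - q ^ K := by
      have := geom_sum_mul q K
      nlinarith [this]
    rw [this]
    have : 0 ≤ q ^ K := pow_nonneg hq0 K
    linarith
  set B : ℝ := ∑ μ ∈ s.erase μ₀, (d μ : ℝ) * (2 / ‖μ / μ₀ - 1‖) with hB
  have key : ∀ K : ℕ, (K : ℝ) ≤ (n : ℝ) / (1 - q) + B := by
    intro K
    set T : ℂ := ∑ k ∈ Finset.range K, (∑ μ ∈ s, (d μ : ℂ) * μ ^ (k+1)) / μ₀ ^ (k+1) with hT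
    -- upper bound for ‖T‖
    have hupper : ‖T‖ ≤ (n : ℝ) / (1 - q) := by
      calc ‖T‖ ≤ ∑ k ∈ Finset.range K, ‖(∑ μ ∈ s, (d μ : ℂ) * μ ^ (k+1)) / μ₀ ^ (k+1)‖ :=
            norm_sum_le _ _
        _ ≤ ∑ k ∈ Finset.range K, (n : ℝ) * q ^ k := by
            refine Finset.sum_le_sum fun k _ => ?_
            rw [norm_div, norm_pow]
            rw [div_le_iff₀ (by positivity)]
            calc ‖∑ μ ∈ s, (d μ : ℂ) * μ ^ (k+1)‖ ≤ (n : ℝ) * m ^ (k+1) :=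
                  htr (k+1) (by omega)
              _ ≤ (n : ℝ) * q ^ k * r ^ (k+1) := by
                  have heq : q ^ k * r ^ (k+1) = m ^ k * r := by
                    rw [hq, div_pow]
                    field_simp
                    ring
                  rw [mul_assoc, heq]
                  have : m ^ (k+1) ≤ m ^ k * r := by
                    rw [pow_succ]
                    exact mul_le_mul_of_nonneg_left hrm.le (pow_nonneg hm k)
                  exact mul_le_mul_of_nonneg_left this (Nat.cast_nonneg n)
        _ = (n : ℝ) * ∑ k ∈ Finset.range K, q ^ k := by rw [Finset.mul_sum]
        _ ≤ (n : ℝ) * (1 / (1 - q)) := by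
            exact mul_le_mul_of_nonneg_left (hgeom K) (Nat.cast_nonneg n)
        _ = (n : ℝ) / (1 - q) := by ring
    -- rewrite T as sum over eigenvalues
    have hswap : T = ∑ μ ∈ s, (d μ : ℂ) * ∑ k ∈ Finset.range K, (μ / μ₀) ^ (k+1) := by
      calc T = ∑ k ∈ Finset.range K, ∑ μ ∈ s, (d μ : ℂ) * (μ / μ₀) ^ (k+1) := by
            refine Finset.sum_congr rfl fun k _ => ?_
            rw [Finset.sum_div]
            refine Finset.sum_congr rfl fun μ _ => ?_
            rw [div_pow, mul_div_assoc]
        _ = ∑ μ ∈ s, ∑ k ∈ Finset.range K, (d μ : ℂ) * (μ / μ₀) ^ (k+1) := Finset.sum_comm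
        _ = ∑ μ ∈ s, (d μ : ℂ) * ∑ k ∈ Finset.range K, (μ / μ₀) ^ (k+1) := by
            exact Finset.sum_congr rfl fun μ _ => (Finset.mul_sum _ _ _).symm
    have hsplit : T = (d μ₀ : ℂ) * (K : ℂ) + ∑ μ ∈ s.erase μ₀,
        (d μ : ℂ) * ∑ k ∈ Finset.range K, (μ / μ₀) ^ (k+1) := by
      have hμ₀K : ∑ k ∈ Finset.range K, (μ₀ / μ₀ : ℂ) ^ (k+1) = (K : ℂ) := by
        rw [div_self h0]
        simp
      rw [hswap, ← Finset.add_sum_erase s _ hμ₀, hμ₀K]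
    have herase : ‖∑ μ ∈ s.erase μ₀, (d μ : ℂ) * ∑ k ∈ Finset.range K, (μ / μ₀) ^ (k+1)‖ ≤ B := by
      calc ‖∑ μ ∈ s.erase μ₀, (d μ : ℂ) * ∑ k ∈ Finset.range K, (μ / μ₀) ^ (k+1)‖
          ≤ ∑ μ ∈ s.erase μ₀, ‖(d μ : ℂ) * ∑ k ∈ Finset.range K, (μ / μ₀) ^ (k+1)‖ :=
            norm_sum_le _ _
        _ ≤ B := by
            refine Finset.sum_le_sum fun μ hμ => ?_
            rw [norm_mul, Complex.norm_natCast]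
            refine mul_le_mul_of_nonneg_left ?_ (Nat.cast_nonneg _)
            set x : ℂ := μ / μ₀ with hx
            have hxle : ‖x‖ ≤ 1 := by
              rw [hx, norm_div]
              rw [div_le_one hr0]
              exact hmax μ (Finset.mem_of_mem_erase hμ)
            have hxne : x ≠ 1 := by
              intro hcon
              rw [hx] at hcon
              exact (Finset.ne_of_mem_erase hμ) ((div_eq_one_iff_eq h0).mp hcon)
            have hgx : ∑ k ∈ Finset.range K, x ^ (k+1) = x * ((x ^ K - 1) / (x - 1)) := by
              rw [← geom_sum_eq hxne, Finset.mul_sum]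
              exact Finset.sum_congr rfl fun k _ => by rw [← pow_succ']
            rw [hgx, norm_mul, norm_div (x ^ K - 1) (x - 1)]
            calc ‖x‖ * (‖x ^ K - 1‖ / ‖x - 1‖)
                ≤ 1 * (2 / ‖x - 1‖) := by
                  have hx1 : (0:ℝ) < ‖x - 1‖ := by
                    rw [norm_pos_iff, sub_ne_zero]
                    exact hxne
                  have h2' : ‖x ^ K - 1‖ ≤ 2 := by
                    calc ‖x ^ K - 1‖ ≤ ‖x ^ K‖ + ‖(1:ℂ)‖ := norm_sub_le _ _
                      _ ≤ 1 + 1 := by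
                          rw [norm_pow, norm_one]
                          exact add_le_add (pow_le_one₀ (norm_nonneg _) hxle) le_rfl
                      _ = 2 := by norm_num
                  refine mul_le_mul hxle ?_ (by positivity) zero_le_one
                  gcongr
              _ = 2 / ‖x - 1‖ := one_mul _
    -- combine
    have hd0 : (1 : ℝ) ≤ (d μ₀ : ℝ) := by exact_mod_cast hd μ₀ hμ₀
    have hlow : (K : ℝ) ≤ ‖T‖ + B := by
      have h1 : ‖(d μ₀ : ℂ) * (K : ℂ)‖ = (d μ₀ : ℝ) * (K : ℝ) := by
        rw [norm_mul, Complex.norm_natCast, Complex.norm_natCast]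
      have h2 : ‖(d μ₀ : ℂ) * (K : ℂ)‖ ≤ ‖T‖ + B := by
        have heq : (d μ₀ : ℂ) * (K : ℂ) = T - ∑ μ ∈ s.erase μ₀,
            (d μ : ℂ) * ∑ k ∈ Finset.range K, (μ / μ₀) ^ (k+1) := by
          rw [hsplit]
          ring
        rw [heq]
        calc ‖T - ∑ μ ∈ s.erase μ₀, (d μ : ℂ) * ∑ k ∈ Finset.range K, (μ / μ₀) ^ (k+1)‖
            ≤ ‖T‖ + ‖∑ μ ∈ s.erase μ₀, (d μ : ℂ) * ∑ k ∈ Finset.range K, (μ / μ₀) ^ (k+1)‖ :=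
              norm_sub_le _ _
          _ ≤ ‖T‖ + B := by linarith [herase]
      calc (K : ℝ) = 1 * (K : ℝ) := (one_mul _).symm
        _ ≤ (d μ₀ : ℝ) * (K : ℝ) := by
            exact mul_le_mul_of_nonneg_right hd0 (Nat.cast_nonneg _)
        _ ≤ ‖T‖ + B := h1 ▸ h2
    linarith
  obtain ⟨K, hK⟩ := exists_nat_gt ((n : ℝ) / (1 - q) + B)
  exact absurd (key K) (by linarith)

/-- traces over the disc are bounded by `n`. -/
lemma trace_pow_bound {n : ℕ} (A : Matrix (Fin n) (Fin n) ℂ) (hA : sRad A < 1) (k : ℕ) :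
    ‖Matrix.trace (A ^ k)‖ ≤ (n : ℝ) := by
  obtain ⟨s, d, hs, hd, htr⟩ := traceData A
  have hsum : ∑ μ ∈ s, (d μ : ℝ) = (n : ℝ) := by
    have h0 := htr 0
    simp only [pow_zero, Matrix.trace_one, mul_one] at h0
    have : ((n : ℕ) : ℂ) = ((∑ μ ∈ s, d μ : ℕ) : ℂ) := by
      push_cast
      simpa using h0
    have hn : (n : ℕ) = ∑ μ ∈ s, d μ := Nat.cast_injective this
    rw [hn]
    push_cast
    ring
  have hnorm1 : ∀ μ ∈ s, ‖μ‖ ≤ 1 := by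
    intro μ hμ
    have hμsp : μ ∈ spectrum ℂ A := by rw [← hs]; exact_mod_cast hμ
    have hbdd : BddAbove ((fun μ => ‖μ‖) '' spectrum ℂ A) := by
      rw [← hs]
      exact (s.finite_toSet.image _).bddAbove
    have : ‖μ‖ ≤ sRad A := le_csSup hbdd ⟨μ, hμsp, rfl⟩
    linarith
  calc ‖Matrix.trace (A ^ k)‖ = ‖∑ μ ∈ s, (d μ : ℂ) * μ ^ k‖ := by rw [htr k]
    _ ≤ ∑ μ ∈ s, ‖(d μ : ℂ) * μ ^ k‖ := norm_sum_le _ _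
    _ ≤ ∑ μ ∈ s, (d μ : ℝ) := by
        refine Finset.sum_le_sum fun μ hμ => ?_
        rw [norm_mul, Complex.norm_natCast, norm_pow]
        calc (d μ : ℝ) * ‖μ‖ ^ k ≤ (d μ : ℝ) * 1 :=
              mul_le_mul_of_nonneg_left (pow_le_one₀ (norm_nonneg _) (hnorm1 μ hμ)) (Nat.cast_nonneg _)
          _ = (d μ : ℝ) := mul_one _
    _ = (n : ℝ) := hsum

/-- (Globevnik) If `F : 𝔻 → Ω_n` is holomorphic and `F(ζ₁) = 0`, then
`r(F(ζ₂)) ≤ |(ζ₁ - ζ₂)/(1 - conj(ζ₁)ζ₂)|` for every `ζ₂ ∈ 𝔻`. -/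
theorem stmt8 {n : ℕ} (F : ℂ → Matrix (Fin n) (Fin n) ℂ)
    (hol : ∀ i j : Fin n, DifferentiableOn ℂ (fun ζ => F ζ i j) (ball (0 : ℂ) 1))
    (hmap : ∀ ζ ∈ ball (0 : ℂ) 1, sRad (F ζ) < 1)
    (ζ₁ : ℂ) (hζ₁ : ζ₁ ∈ ball (0 : ℂ) 1) (hF0 : F ζ₁ = 0) :
    ∀ ζ₂ ∈ ball (0 : ℂ) 1,
      sRad (F ζ₂) ≤ ‖(ζ₁ - ζ₂) / (1 - (starRingEnd ℂ ζ₁) * ζ₂)‖ := by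
  intro ζ₂ hζ₂
  set m : ℝ := ‖(ζ₁ - ζ₂) / (1 - (starRingEnd ℂ ζ₁) * ζ₂)‖ with hm
  -- the divided-difference matrix G
  set G : ℂ → Matrix (Fin n) (Fin n) ℂ :=
    fun ζ => Matrix.of fun i j => dslope (fun z => F z i j) ζ₁ ζ with hG
  have hGdiff : ∀ i j : Fin n, DifferentiableOn ℂ (fun ζ => G ζ i j) (ball (0:ℂ) 1) := by
    intro i j
    have : DifferentiableOn ℂ (dslope (fun z => F z i j) ζ₁) (ball (0:ℂ) 1) :=
      (Complex.differentiableOn_dslope (isOpen_ball.mem_nhds hζ₁)).mpr (hol i j)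
    exact this
  have hFG : ∀ ζ, F ζ = (ζ - ζ₁) • G ζ := by
    intro ζ
    ext i j
    have := sub_smul_dslope (fun z => F z i j) ζ₁ ζ
    rw [show F ζ₁ i j = 0 by rw [hF0]; rfl, sub_zero] at this
    simpa [hG, Matrix.smul_apply, smul_eq_mul] using this.symm
  -- entries of powers of G are differentiable
  have hGpow : ∀ (k : ℕ) (i j : Fin n),
      DifferentiableOn ℂ (fun ζ => ((G ζ) ^ k) i j) (ball (0:ℂ) 1) := by
    intro k
    induction k with
    | zero => intro i j; simpa [pow_zero] using differentiableOn_const ((1 : Matrix (Fin n) (Fin n) ℂ) i j)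
    | succ k ih =>
      intro i j
      have heq : (fun ζ => ((G ζ) ^ (k+1)) i j)
          = fun ζ => ∑ l, ((G ζ) ^ k) i l * (G ζ) l j := by
        funext ζ
        rw [pow_succ, Matrix.mul_apply]
      rw [heq]
      exact DifferentiableOn.fun_sum fun l _ => (ih i l).mul (hGdiff l j)
  -- trace of F^k factorization
  have htrF : ∀ (k : ℕ) (ζ : ℂ),
      Matrix.trace ((F ζ) ^ k) = (ζ - ζ₁) ^ k * Matrix.trace ((G ζ) ^ k) := by
    intro k ζ
    rw [hFG ζ, smul_pow, Matrix.trace_smul, smul_eq_mul]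
  -- Schwarz bound on trace powers
  have hbound : ∀ k : ℕ, 1 ≤ k → ‖Matrix.trace ((F ζ₂) ^ k)‖ ≤ (n : ℝ) * m ^ k := by
    intro k hk
    have hu : DifferentiableOn ℂ (fun ζ => Matrix.trace ((G ζ) ^ k)) (ball (0:ℂ) 1) := by
      have heq : (fun ζ => Matrix.trace ((G ζ) ^ k))
          = fun ζ => ∑ i, ((G ζ) ^ k) i i := by
        funext ζ
        rw [Matrix.trace]
        rfl
      rw [heq]
      exact DifferentiableOn.fun_sum fun i _ => hGpow k i i
    have hb : ∀ ζ ∈ ball (0:ℂ) 1, ‖(ζ - ζ₁) ^ k * Matrix.trace ((G ζ) ^ k)‖ ≤ (n : ℝ) := by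
      intro ζ hζ
      rw [← htrF k ζ]
      exact trace_pow_bound (F ζ) (hmap ζ hζ) k
    have := schwarz_mult hu (Nat.cast_nonneg n) k hζ₁ hζ₂ hb
    rw [← htrF k ζ₂] at this
    exact this
  -- conclude via spectrum_bound
  obtain ⟨s, d, hs, hd, htr⟩ := traceData (F ζ₂)
  have hfin : ∀ μ ∈ s, ‖μ‖ ≤ m := by
    refine spectrum_bound (n := n) (norm_nonneg _) hd fun k hk => ?_
    rw [← htr k]
    exact hbound k hk
  apply Real.sSup_le
  · rintro x ⟨μ, hμ, rfl⟩
    have hμs : μ ∈ s := by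
      rw [← hs] at hμ
      exact_mod_cast hμ
    exact hfin μ hμs
  · exact norm_nonneg _
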